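/- Let I be a two-sided ideal of a ring R with I contained in the Jacobson radical J(R). Then R is a CSNC ring if and only if I is nil (every element of I is nilpotent) and the quotient ring R/I is a CSNC ring. -/

import Mathlib

open Polynomial

/-- An element `a` of a ring is *clean* if `a = e + u` for some idempotent `e` and unit `u`. -/
def IsCleanElem {R : Type*} [Ring R] (a : R) : Prop :=
  ∃ e u : R, IsIdempotentElem e ∧ IsUnit u ∧ a = e + u

/-- An element `a` of a ring is *strongly nil-clean* if `a = e + q` for some idempotent `e`
and nilpotent `q` with `e * q = q * e`. -/
def IsStronglyNilCleanElem {R : Type*} [Ring R] (a : R) : Prop :=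
  ∃ e q : R, IsIdempotentElem e ∧ IsNilpotent q ∧ e * q = q * e ∧ a = e + q

/-- A ring is a *CSNC ring* if every clean element is strongly nil-clean. -/
def IsCSNCRing (R : Type*) [Ring R] : Prop :=
  ∀ a : R, IsCleanElem a → IsStronglyNilCleanElem a

section Aux

variable {R : Type*} [Ring R]

private lemma key_dvd (n : ℕ) :
    (X - X ^ 2 : ℤ[X]) ∣ X - (1 - (1 - X ^ (n + 1)) ^ (n + 1)) := by
  have h1 : (X - X ^ 2 : ℤ[X]) ∣ (1 - X ^ (n + 1)) ^ (n + 1) - (1 - X) ^ (n + 1) := by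
    have d1 : ((1 - X ^ (n + 1)) - (1 - X) : ℤ[X]) ∣
        (1 - X ^ (n + 1)) ^ (n + 1) - (1 - X) ^ (n + 1) := sub_dvd_pow_sub_pow _ _ (n + 1)
    refine dvd_trans ?_ d1
    have d2 : ((1 : ℤ[X]) - X) ∣ 1 - X ^ n := by
      simpa using sub_dvd_pow_sub_pow (1 : ℤ[X]) X n
    obtain ⟨c, hc⟩ := d2
    refine ⟨c, ?_⟩
    have : ((1 - X ^ (n + 1)) - (1 - X) : ℤ[X]) = X * (1 - X ^ n) := by ring
    rw [this, hc]; ring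
  have h2 : (X - X ^ 2 : ℤ[X]) ∣ (1 - X) ^ (n + 1) - (1 - X) := by
    have d3 : (X : ℤ[X]) ∣ 1 - (1 - X) ^ n := by
      have := sub_dvd_pow_sub_pow (1 : ℤ[X]) (1 - X) n
      simpa using this
    obtain ⟨c, hc⟩ := d3
    refine ⟨-c, ?_⟩
    have e1 : ((1 - X) ^ (n + 1) - (1 - X) : ℤ[X]) = -((1 - X) * (1 - (1 - X) ^ n)) := by
      rw [pow_succ]; ring
    rw [e1, hc]; ring
  have := dvd_add h1 h2
  rwa [sub_add_sub_cancel, show ((1 - X ^ (n + 1)) ^ (n + 1) - (1 - X) : ℤ[X])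
    = X - (1 - (1 - X ^ (n + 1)) ^ (n + 1)) by ring] at this

private lemma nilpotent_sub_idem {a : R} {n : ℕ} (hn : (a - a ^ 2) ^ (n + 1) = 0) :
    IsNilpotent (a - (1 - (1 - a ^ (n + 1)) ^ (n + 1))) := by
  have hd := pow_dvd_pow_of_dvd (key_dvd n) (n + 1)
  have h := map_dvd (Polynomial.aeval a) hd
  simp only [map_pow, map_sub, map_one, aeval_X] at h
  rw [hn, zero_dvd_iff] at h
  exact ⟨n + 1, h⟩

private lemma snc_of_nilpotent_sub_sq {a : R} (h : IsNilpotent (a - a * a)) :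
    IsStronglyNilCleanElem a := by
  obtain ⟨n, hn⟩ := h
  have hsq : a - a ^ 2 = a - a * a := by rw [sq]
  have hn' : (a - a ^ 2) ^ (n + 1) = 0 := by
    rw [pow_succ, hsq, hn, zero_mul]
  set e := 1 - (1 - a ^ (n + 1)) ^ (n + 1) with he_def
  have he : IsIdempotentElem e := isIdempotentElem_one_sub_one_sub_pow_pow a (n + 1) hn'
  have hq : IsNilpotent (a - e) := nilpotent_sub_idem hn'
  have hcomm : Commute a e := by
    have h1 : Commute a (a ^ (n + 1)) := (Commute.refl a).pow_right _
    exact (Commute.one_right a).sub_right (((Commute.one_right a).sub_right h1).pow_right _)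
  have hce : Commute e (a - e) := (hcomm.symm.sub_right (Commute.refl e))
  exact ⟨e, a - e, he, hq, hce.eq, by abel⟩

private lemma nilpotent_sub_sq_of_snc {a : R} (h : IsStronglyNilCleanElem a) :
    IsNilpotent (a - a * a) := by
  obtain ⟨e, q, he, hq, hc, rfl⟩ := h
  have key : (e + q) - (e + q) * (e + q) = q * (1 - e - e - q) := by
    simp only [mul_add, add_mul, mul_sub, sub_mul, mul_one, he.eq, hc]
    abel
  rw [key]
  have hc' : Commute e q := hc
  have hcq : Commute q (1 - e - e - q) :=
    (((Commute.one_right q).sub_right hc'.symm).sub_right hc'.symm).sub_right (Commute.refl q)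
  exact hcq.isNilpotent_mul_right hq

private lemma isUnit_of_both {a b : R} (h1 : IsUnit (a * b)) (h2 : IsUnit (b * a)) :
    IsUnit a := by
  obtain ⟨w, hw⟩ := h1
  obtain ⟨w', hw'⟩ := h2
  have hr : a * (b * ↑w⁻¹) = 1 := by rw [← mul_assoc, ← hw, w.mul_inv]
  have hl : (↑w'⁻¹ * b) * a = 1 := by rw [mul_assoc, ← hw', w'.inv_mul]
  have heq : (↑w'⁻¹ * b : R) = b * ↑w⁻¹ := by
    have h := congrArg (· * (b * ↑w⁻¹)) hl
    simpa only [mul_assoc, hr, mul_one, one_mul] using h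
  exact ⟨⟨a, b * ↑w⁻¹, hr, heq ▸ hl⟩, rfl⟩

private lemma left_inv_of_mem_jac {a : R}
    (ha : a ∈ TwoSidedIdeal.jacobson (⊥ : TwoSidedIdeal R)) : ∃ z : R, z * (1 - a) = 1 := by
  obtain ⟨z, hz⟩ := TwoSidedIdeal.mem_jacobson_iff.mp ha (-1)
  have hz0 : z * (-1) * a + z - 1 = 0 := by simpa using hz
  refine ⟨z, ?_⟩
  rw [mul_sub, mul_one]
  rw [mul_neg_one, neg_mul] at hz0
  have h2 : -(z * a) + z = 1 := by rwa [sub_eq_zero] at hz0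
  rw [← h2]; abel

private lemma unit_of_mem_jac {x : R}
    (hx : x ∈ TwoSidedIdeal.jacobson (⊥ : TwoSidedIdeal R)) : IsUnit (1 - x) := by
  obtain ⟨z, hz⟩ := left_inv_of_mem_jac hx
  have hzx : -(z * x) ∈ TwoSidedIdeal.jacobson (⊥ : TwoSidedIdeal R) :=
    TwoSidedIdeal.neg_mem _ (TwoSidedIdeal.mul_mem_left _ _ _ hx)
  have hz1 : z = 1 - -(z * x) := by
    have : z - z * x = 1 := by rw [← hz, mul_sub, mul_one]
    rw [sub_neg_eq_add, ← this]; abel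
  obtain ⟨w, hw⟩ := left_inv_of_mem_jac hzx
  rw [← hz1] at hw
  have hwzx : w = 1 - x := by
    calc w = w * (z * (1 - x)) := by rw [hz, mul_one]
    _ = (w * z) * (1 - x) := by rw [mul_assoc]
    _ = 1 - x := by rw [hw, one_mul]
  exact ⟨⟨1 - x, z, hwzx ▸ hw, hz⟩, rfl⟩

end Aux

theorem stmt_11 (R : Type*) [Ring R] (I : TwoSidedIdeal R)
    (hIJ : I ≤ TwoSidedIdeal.jacobson (⊥ : TwoSidedIdeal R)) :
    IsCSNCRing R ↔ (∀ x ∈ I, IsNilpotent x) ∧ IsCSNCRing I.ringCon.Quotient := by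
  set π : R →+* I.ringCon.Quotient := I.ringCon.mk' with hπ
  have hker : ∀ x : R, π x = 0 ↔ x ∈ I := by
    intro x
    have h0 : π x = π 0 ↔ I.ringCon x 0 := RingCon.eq _
    rw [map_zero] at h0
    exact h0
  have hsurj : Function.Surjective π := fun b => Quot.inductionOn b fun r => ⟨r, rfl⟩
  have hJ : ∀ x ∈ I, IsUnit (1 - x) := fun x hx => unit_of_mem_jac (hIJ hx)
  constructor
  · intro hR
    have hnil : ∀ x ∈ I, IsNilpotent x := by
      intro x hx
      have hclean : IsCleanElem x :=
        ⟨1, x - 1, IsIdempotentElem.one, by simpa using (hJ x hx).neg, by abel⟩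
      obtain ⟨m, hm⟩ := nilpotent_sub_sq_of_snc (hR x hclean)
      have hcomm : Commute x (1 - x) := (Commute.one_right x).sub_right (Commute.refl x)
      have h0 : x ^ m * (1 - x) ^ m = 0 := by
        rw [← hcomm.mul_pow, show x * (1 - x) = x - x * x by rw [mul_sub, mul_one]]; exact hm
      exact ⟨m, by rwa [IsUnit.mul_left_eq_zero ((hJ x hx).pow m)] at h0⟩
    refine ⟨hnil, ?_⟩
    rintro b ⟨ε, ω, hε, hω, rfl⟩
    have hkn : ∀ x ∈ RingHom.ker π, IsNilpotent x := fun x hx => hnil x ((hker x).mp hx)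
    obtain ⟨e, he, hee⟩ := exists_isIdempotentElem_eq_of_ker_isNilpotent π hkn ε
      (RingHom.range_eq_top.mpr hsurj ▸ Subring.mem_top ε) hε
    obtain ⟨u₀, hu₀⟩ := hsurj ω
    obtain ⟨v₀, hv₀⟩ := hsurj ↑hω.unit⁻¹
    have h1 : u₀ * v₀ - 1 ∈ I := by
      rw [← hker]
      simp [map_sub, map_mul, hu₀, hv₀]
    have h2 : v₀ * u₀ - 1 ∈ I := by
      rw [← hker]
      simp [map_sub, map_mul, hu₀, hv₀]
    have hu₀v₀ : IsUnit (u₀ * v₀) := by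
      have := hJ _ (I.neg_mem h1)
      rwa [show (1 : R) - -(u₀ * v₀ - 1) = u₀ * v₀ by abel] at this
    have hv₀u₀ : IsUnit (v₀ * u₀) := by
      have := hJ _ (I.neg_mem h2)
      rwa [show (1 : R) - -(v₀ * u₀ - 1) = v₀ * u₀ by abel] at this
    have hu : IsUnit u₀ := isUnit_of_both hu₀v₀ hv₀u₀
    have ha : IsCleanElem (e + u₀) := ⟨e, u₀, he, hu, rfl⟩
    have hn := nilpotent_sub_sq_of_snc (hR _ ha)
    have h3 : IsNilpotent ((ε + ω) - (ε + ω) * (ε + ω)) := by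
      have := hn.map π
      simpa [map_sub, map_mul, map_add, hee, hu₀] using this
    exact snc_of_nilpotent_sub_sq h3
  · rintro ⟨hnil, hQ⟩ a ⟨e, u, he, hu, rfl⟩
    have hπe : IsIdempotentElem (π e) := by
      show π e * π e = π e
      rw [← map_mul, he.eq]
    have hclean : IsCleanElem (π (e + u)) := ⟨π e, π u, hπe, hu.map π, by rw [map_add]⟩
    obtain ⟨m, hm⟩ := nilpotent_sub_sq_of_snc (hQ _ hclean)
    have hmem : ((e + u) - (e + u) * (e + u)) ^ m ∈ I := by
      rw [← hker, map_pow, map_sub, map_mul]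
      exact hm
    obtain ⟨k, hk⟩ := hnil _ hmem
    exact snc_of_nilpotent_sub_sq ⟨m * k, by rw [pow_mul, hk]⟩
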